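/- Let k : (0,∞) → [0,∞) be locally integrable with Laplace transform 𝒦(λ) finite and positive for every λ > 0, let G be a subordination density associated with 𝒦, and let u : (0,∞) → [0,∞) be integrable on (0,∞). Define u^E(t) = ∫_0^∞ u(τ) G(t,τ) dτ and U(t) = ∫_0^t u^E(r) dr. Then for every λ > 0, λ · (∫_0^∞ e^{-λt} U(t) dt) = 𝒦(λ) ∫_0^∞ e^{-τ λ 𝒦(λ)} u(τ) dτ. -/

import Mathlib

open MeasureTheory Real Filter Set
open scoped ENNReal

lemma aux_exp_integral {l : ℝ} (hl : 0 < l) (r : ℝ) :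
    ∫ t in Ioi r, Real.exp (-l * t) = Real.exp (-l * r) / l := by
  have hderiv : ∀ x ∈ Ici r, HasDerivAt (fun x => -Real.exp (-l * x) / l)
      (Real.exp (-l * x)) x := by
    intro x _
    have h1 : HasDerivAt (fun x : ℝ => -l * x) (-l) x := by
      simpa using (hasDerivAt_id x).const_mul (-l)
    have h2 := (Real.hasDerivAt_exp (-l * x)).comp x h1
    have h3 := (h2.div_const l).neg
    have he : -(Real.exp (-l * x) * -l / l) = Real.exp (-l * x) := by field_simp
    rw [he] at h3
    have e : (fun x => -Real.exp (-l * x) / l) = (-fun x => (Real.exp ∘ HMul.hMul (-l)) x / l) := by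
      funext y
      simp [Function.comp, neg_div]
    rw [e]; exact h3
  have htend : Tendsto (fun x => -Real.exp (-l * x) / l) atTop (nhds 0) := by
    have h0 : Tendsto (fun x : ℝ => -l * x) atTop atBot :=
      tendsto_id.const_mul_atTop_of_neg (neg_neg_iff_pos.mpr hl)
    have := (Real.tendsto_exp_atBot.comp h0).neg.div_const l
    simpa using this
  have := integral_Ioi_of_hasDerivAt_of_tendsto' hderiv (exp_neg_integrableOn_Ioi r hl) htend
  rw [this]; field_simp; ring

theorem laplace_transform_primitive_subordinated
    (k K : ℝ → ℝ)
    (hk_nonneg : ∀ t ∈ Ioi (0:ℝ), 0 ≤ k t)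
    (hk_loc : LocallyIntegrableOn k (Ioi 0))
    (hK_int : ∀ l : ℝ, 0 < l → IntegrableOn (fun t => Real.exp (-l * t) * k t) (Ioi 0))
    (hK_def : ∀ l : ℝ, 0 < l → K l = ∫ t in Ioi (0:ℝ), Real.exp (-l * t) * k t)
    (hK_pos : ∀ l : ℝ, 0 < l → 0 < K l)
    (G : ℝ → ℝ → ℝ)
    (hG_meas : Measurable (Function.uncurry G))
    (hG_nonneg : ∀ t ∈ Ioi (0:ℝ), ∀ τ ∈ Ioi (0:ℝ), 0 ≤ G t τ)
    (hG : ∀ l : ℝ, 0 < l → ∀ τ : ℝ, 0 < τ →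
      ∫ t in Ioi (0:ℝ), Real.exp (-l * t) * G t τ = K l * Real.exp (-(τ * l * K l)))
    (u : ℝ → ℝ)
    (hu_nonneg : ∀ τ ∈ Ioi (0:ℝ), 0 ≤ u τ)
    (hu_int : IntegrableOn u (Ioi 0)) :
    ∀ l : ℝ, 0 < l →
      l * ∫ t in Ioi (0:ℝ), Real.exp (-l * t) *
          (∫ r in (0:ℝ)..t, ∫ τ in Ioi (0:ℝ), u τ * G r τ) =
        K l * ∫ τ in Ioi (0:ℝ), Real.exp (-(τ * l * K l)) * u τ := by
  intro l hl
  set ν : Measure ℝ := volume.restrict (Ioi 0) with hν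
  have hc : 0 < K l := hK_pos l hl
  obtain ⟨u', hu'_meas, hu'_eq⟩ : ∃ u' : ℝ → ℝ, Measurable u' ∧ u =ᵐ[ν] u' := by
    rcases hu_int.aemeasurable with ⟨u', hm, he⟩
    exact ⟨u', hm, he⟩
  have hmem : ∀ᵐ t ∂ν, t ∈ Ioi (0:ℝ) := ae_restrict_mem measurableSet_Ioi
  set M : ℝ → ℝ≥0∞ := fun t => ∫⁻ τ, ENNReal.ofReal (u' τ) * ENNReal.ofReal (G t τ) ∂ν
    with hM
  have hM_meas : Measurable M := by
    apply Measurable.lintegral_prod_right' (f := fun p : ℝ × ℝ =>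
      ENNReal.ofReal (u' p.2) * ENNReal.ofReal (G p.1 p.2))
    exact ((ENNReal.measurable_ofReal.comp (hu'_meas.comp measurable_snd)).mul
      (ENNReal.measurable_ofReal.comp hG_meas))
  set J : ℝ≥0∞ := ∫⁻ t, ENNReal.ofReal (Real.exp (-l * t)) * M t ∂ν with hJ
  -- Step A
  have hGint : ∀ τ : ℝ, 0 < τ →
      IntegrableOn (fun t => Real.exp (-l * t) * G t τ) (Ioi 0) := by
    intro τ hτ
    by_contra h
    have h0 := hG l hl τ hτ
    rw [integral_undef h] at h0
    have : (0:ℝ) < K l * Real.exp (-(τ * l * K l)) := by positivity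
    rw [← h0] at this; exact lt_irrefl _ this
  have hGlin : ∀ τ : ℝ, 0 < τ →
      ∫⁻ t, ENNReal.ofReal (Real.exp (-l * t) * G t τ) ∂ν =
        ENNReal.ofReal (K l * Real.exp (-(τ * l * K l))) := by
    intro τ hτ
    rw [← hG l hl τ hτ]
    refine (ofReal_integral_eq_lintegral_ofReal (hGint τ hτ) ?_).symm
    filter_upwards [hmem] with t ht
    exact mul_nonneg (exp_nonneg _) (hG_nonneg t ht τ hτ)
  -- Tonelli for J
  have hF_meas : AEMeasurable (Function.uncurry fun t τ =>
      ENNReal.ofReal (Real.exp (-l * t)) * (ENNReal.ofReal (u' τ) * ENNReal.ofReal (G t τ)))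
      (ν.prod ν) := by
    apply Measurable.aemeasurable
    exact (ENNReal.measurable_ofReal.comp ((measurable_fst.const_mul (-l)).exp)).mul
      ((ENNReal.measurable_ofReal.comp (hu'_meas.comp measurable_snd)).mul
        (ENNReal.measurable_ofReal.comp hG_meas))
  have hswap := lintegral_lintegral_swap hF_meas
  have hJ1 : J = ∫⁻ t, ∫⁻ τ, ENNReal.ofReal (Real.exp (-l * t)) *
      (ENNReal.ofReal (u' τ) * ENNReal.ofReal (G t τ)) ∂ν ∂ν := by
    rw [hJ]
    refine lintegral_congr fun t => ?_
    rw [lintegral_const_mul' _ _ ENNReal.ofReal_ne_top]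
  have hJ2 : J = ENNReal.ofReal (K l) *
      ∫⁻ τ, ENNReal.ofReal (Real.exp (-(τ * l * K l)) * u τ) ∂ν := by
    rw [hJ1, hswap, ← lintegral_const_mul' _ _ ENNReal.ofReal_ne_top]
    apply lintegral_congr_ae
    filter_upwards [hmem, hu'_eq] with τ hτ hτu
    have e1 : ∀ t : ℝ, ENNReal.ofReal (Real.exp (-l * t)) *
        (ENNReal.ofReal (u' τ) * ENNReal.ofReal (G t τ)) =
        ENNReal.ofReal (u' τ) * ENNReal.ofReal (Real.exp (-l * t) * G t τ) := by
      intro t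
      rw [ENNReal.ofReal_mul (exp_nonneg _)]; ring
    simp_rw [e1]
    rw [lintegral_const_mul' _ _ ENNReal.ofReal_ne_top, hGlin τ hτ, ← hτu,
      ENNReal.ofReal_mul hc.le, ENNReal.ofReal_mul (exp_nonneg _)]
    ring
  -- RHS value
  have hR_nn : 0 ≤ᵐ[ν] fun τ => Real.exp (-(τ * l * K l)) * u τ := by
    filter_upwards [hmem] with τ hτ
    exact mul_nonneg (exp_nonneg _) (hu_nonneg τ hτ)
  have hR_int : IntegrableOn (fun τ => Real.exp (-(τ * l * K l)) * u τ) (Ioi 0) := by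
    refine MeasureTheory.Integrable.mono hu_int ?_ ?_
    · have hcont : Continuous fun τ : ℝ => Real.exp (-(τ * l * K l)) := by fun_prop
      exact hcont.aestronglyMeasurable.mul hu_int.aestronglyMeasurable
    · filter_upwards [hmem] with τ hτ
      have h1 : Real.exp (-(τ * l * K l)) ≤ 1 := by
        rw [exp_le_one_iff]
        have hτ' : (0:ℝ) < τ := hτ
        have : 0 ≤ τ * l * K l := mul_nonneg (mul_nonneg hτ'.le hl.le) hc.le
        linarith
      rw [norm_mul, norm_of_nonneg (exp_nonneg _)]
      nlinarith [norm_nonneg (u τ), exp_nonneg (-(τ * l * K l))]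
  have hLτ : ENNReal.ofReal (∫ τ, Real.exp (-(τ * l * K l)) * u τ ∂ν) =
      ∫⁻ τ, ENNReal.ofReal (Real.exp (-(τ * l * K l)) * u τ) ∂ν :=
    ofReal_integral_eq_lintegral_ofReal hR_int hR_nn
  have hR_nonneg : 0 ≤ ∫ τ, Real.exp (-(τ * l * K l)) * u τ ∂ν :=
    integral_nonneg_of_ae hR_nn
  have hJval : J = ENNReal.ofReal (K l * ∫ τ, Real.exp (-(τ * l * K l)) * u τ ∂ν) := by
    rw [hJ2, ← hLτ, ← ENNReal.ofReal_mul hc.le]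
  have hJne : J ≠ ⊤ := by rw [hJval]; exact ENNReal.ofReal_ne_top
  have hRHS : K l * ∫ τ, Real.exp (-(τ * l * K l)) * u τ ∂ν = J.toReal := by
    rw [hJval, ENNReal.toReal_ofReal (by positivity)]
  -- finiteness of M a.e.
  have hMfin : ∀ᵐ t ∂ν, M t < ⊤ := by
    have hmeas : Measurable fun t => ENNReal.ofReal (Real.exp (-l * t)) * M t :=
      (ENNReal.measurable_ofReal.comp ((measurable_id.const_mul (-l)).exp)).mul hM_meas
    have h := ae_lt_top hmeas (by rw [← hJ]; exact hJne)
    filter_upwards [h] with t ht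
    by_contra hcon
    push_neg at hcon
    have h0 : ENNReal.ofReal (Real.exp (-l * t)) ≠ 0 := by
      simp [ENNReal.ofReal_eq_zero, not_le, exp_pos]
    rw [top_le_iff.mp hcon, ENNReal.mul_top h0] at ht
    exact lt_irrefl _ ht
  -- the subordinated function equals toReal ∘ M a.e.
  have huE_ae : ∀ᵐ t ∂ν, (∫ τ, u τ * G t τ ∂ν) = (M t).toReal := by
    filter_upwards [hmem] with t ht
    have hnn : 0 ≤ᵐ[ν] fun τ => u τ * G t τ := by
      filter_upwards [hmem] with τ hτ
      exact mul_nonneg (hu_nonneg τ hτ) (hG_nonneg t ht τ hτ)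
    have hsm : AEStronglyMeasurable (fun τ => u τ * G t τ) ν :=
      hu_int.aestronglyMeasurable.mul (hG_meas.of_uncurry_left).aestronglyMeasurable
    rw [integral_eq_lintegral_of_nonneg_ae hnn hsm]
    congr 1
    apply lintegral_congr_ae
    filter_upwards [hmem, hu'_eq] with τ hτ hτu
    rw [ENNReal.ofReal_mul (hu_nonneg τ hτ), hτu]
  -- the primitive N
  set N : ℝ → ℝ≥0∞ := fun t => ∫⁻ r in Ioc 0 t, M r with hNdef
  have hN_mono : Monotone N := fun a b hab =>
    lintegral_mono_set (Ioc_subset_Ioc_right hab)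
  have hN_meas : Measurable N := hN_mono.measurable
  have hN_fin : ∀ t : ℝ, 0 < t → N t ≠ ⊤ := by
    intro t ht
    have hle : N t ≤ ENNReal.ofReal (Real.exp (l * t)) * J := by
      have step : ∀ᵐ r ∂(volume.restrict (Ioc 0 t)), M r ≤
          ENNReal.ofReal (Real.exp (l * t)) * (ENNReal.ofReal (Real.exp (-l * r)) * M r) := by
        rw [ae_restrict_iff' measurableSet_Ioc]
        refine ae_of_all _ fun r hr => ?_
        calc M r = 1 * M r := (one_mul _).symm
        _ ≤ (ENNReal.ofReal (Real.exp (l * t)) * ENNReal.ofReal (Real.exp (-l * r))) * M r := by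
            apply mul_le_mul_left
            rw [← ENNReal.ofReal_mul (exp_nonneg _), ← Real.exp_add]
            refine ENNReal.one_le_ofReal.mpr (Real.one_le_exp ?_)
            nlinarith [hr.2]
        _ = _ := by ring
      calc N t ≤ ∫⁻ r in Ioc 0 t,
            ENNReal.ofReal (Real.exp (l * t)) * (ENNReal.ofReal (Real.exp (-l * r)) * M r) :=
          lintegral_mono_ae step
      _ = ENNReal.ofReal (Real.exp (l * t)) *
            ∫⁻ r in Ioc 0 t, ENNReal.ofReal (Real.exp (-l * r)) * M r :=
          lintegral_const_mul' _ _ ENNReal.ofReal_ne_top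
      _ ≤ ENNReal.ofReal (Real.exp (l * t)) * J := by
          apply mul_le_mul_right
          rw [hJ]
          exact lintegral_mono_set Ioc_subset_Ioi_self
    exact ne_top_of_le_ne_top (ENNReal.mul_ne_top ENNReal.ofReal_ne_top hJne) hle
  -- U(t) = toReal (N t)
  have hU : ∀ t ∈ Ioi (0:ℝ), (∫ r in (0:ℝ)..t, ∫ τ, u τ * G r τ ∂ν) = (N t).toReal := by
    intro t ht
    rw [intervalIntegral.integral_of_le (le_of_lt ht)]
    have hsub : Ioc (0:ℝ) t ⊆ Ioi 0 := Ioc_subset_Ioi_self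
    have hae : ∀ᵐ r ∂(volume.restrict (Ioc 0 t)), (∫ τ, u τ * G r τ ∂ν) = (M r).toReal :=
      ae_restrict_of_ae_restrict_of_subset hsub huE_ae
    have hfin : ∀ᵐ r ∂(volume.restrict (Ioc 0 t)), M r < ⊤ :=
      ae_restrict_of_ae_restrict_of_subset hsub hMfin
    have hnn : 0 ≤ᵐ[volume.restrict (Ioc 0 t)] fun r => ∫ τ, u τ * G r τ ∂ν := by
      filter_upwards [hae] with r hr
      rw [hr]; exact ENNReal.toReal_nonneg
    have hsm : AEStronglyMeasurable (fun r => ∫ τ, u τ * G r τ ∂ν)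
        (volume.restrict (Ioc 0 t)) := by
      refine (hM_meas.ennreal_toReal.aestronglyMeasurable).congr ?_
      filter_upwards [hae] with r hr
      exact hr.symm
    rw [integral_eq_lintegral_of_nonneg_ae hnn hsm]
    congr 1
    apply lintegral_congr_ae
    filter_upwards [hae, hfin] with r h1 h2
    rw [h1, ENNReal.ofReal_toReal h2.ne]
  -- the big swap for the LHS
  have hswap2 : ∫⁻ t, ENNReal.ofReal (Real.exp (-l * t)) * N t ∂ν =
      ENNReal.ofReal (1 / l) * J := by
    set F2 : ℝ → ℝ → ℝ≥0∞ := fun t r => ENNReal.ofReal (Real.exp (-l * t)) * M r *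
      {p : ℝ × ℝ | p.2 ≤ p.1}.indicator 1 (t, r) with hF2
    have hF2meas : AEMeasurable (Function.uncurry F2) (ν.prod ν) := by
      apply Measurable.aemeasurable
      exact (((ENNReal.measurable_ofReal.comp ((measurable_fst.const_mul (-l)).exp)).mul
        (hM_meas.comp measurable_snd)).mul
        (measurable_one.indicator (measurableSet_le measurable_snd measurable_fst)))
    have h1 : ∀ t : ℝ, (∫⁻ r, F2 t r ∂ν) = ENNReal.ofReal (Real.exp (-l * t)) * N t := by
      intro t
      have e : ∀ r, F2 t r =
          ENNReal.ofReal (Real.exp (-l * t)) * (Iic t).indicator M r := by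
        intro r
        simp only [hF2, Set.indicator_apply, Set.mem_setOf_eq, Set.mem_Iic]
        by_cases h : r ≤ t
        · simp [h, mul_assoc]
        · simp [h]
      simp_rw [e]
      rw [lintegral_const_mul' _ _ ENNReal.ofReal_ne_top]
      congr 1
      rw [lintegral_indicator measurableSet_Iic, hν,
        Measure.restrict_restrict measurableSet_Iic, Set.inter_comm, Set.Ioi_inter_Iic]
    have h2 : ∀ᵐ r ∂ν, (∫⁻ t, F2 t r ∂ν) =
        M r * ENNReal.ofReal (Real.exp (-l * r) / l) := by
      filter_upwards [hmem, hMfin] with r hr hfin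
      have e : ∀ t, F2 t r = M r *
          ((Ici r).indicator (fun t => ENNReal.ofReal (Real.exp (-l * t))) t) := by
        intro t
        simp only [hF2, Set.indicator_apply, Set.mem_setOf_eq, Set.mem_Ici]
        by_cases h : r ≤ t
        · simp [h, mul_comm]
        · simp [h]
      simp_rw [e]
      rw [lintegral_const_mul' _ _ hfin.ne]
      congr 1
      rw [lintegral_indicator measurableSet_Ici, hν,
        Measure.restrict_restrict measurableSet_Ici]
      have hset : Ici r ∩ Ioi 0 = Ici r :=
        Set.inter_eq_left.mpr (fun x hx => Set.mem_Ioi.mpr (lt_of_lt_of_le hr hx))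
      rw [hset]
      rw [← ofReal_integral_eq_lintegral_ofReal
        (Iff.mpr integrableOn_Ici_iff_integrableOn_Ioi (exp_neg_integrableOn_Ioi r hl))
        (ae_of_all _ fun t => exp_nonneg _)]
      rw [MeasureTheory.integral_Ici_eq_integral_Ioi, aux_exp_integral hl]
    calc ∫⁻ t, ENNReal.ofReal (Real.exp (-l * t)) * N t ∂ν
        = ∫⁻ t, ∫⁻ r, F2 t r ∂ν ∂ν := by
          refine lintegral_congr fun t => (h1 t).symm
      _ = ∫⁻ r, ∫⁻ t, F2 t r ∂ν ∂ν := lintegral_lintegral_swap hF2meas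
      _ = ∫⁻ r, M r * ENNReal.ofReal (Real.exp (-l * r) / l) ∂ν := lintegral_congr_ae h2
      _ = ENNReal.ofReal (1 / l) * J := by
          rw [hJ, ← lintegral_const_mul' _ _ ENNReal.ofReal_ne_top]
          refine lintegral_congr fun r => ?_
          have : Real.exp (-l * r) / l = (1 / l) * Real.exp (-l * r) := by ring
          rw [this, ENNReal.ofReal_mul (by positivity)]
          ring
  -- final assembly
  have hLHS_nn : 0 ≤ᵐ[ν] fun t =>
      Real.exp (-l * t) * (∫ r in (0:ℝ)..t, ∫ τ, u τ * G r τ ∂ν) := by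
    filter_upwards [hmem] with t ht
    rw [hU t ht]
    positivity
  have hLHS_sm : AEStronglyMeasurable (fun t =>
      Real.exp (-l * t) * (∫ r in (0:ℝ)..t, ∫ τ, u τ * G r τ ∂ν)) ν := by
    refine AEStronglyMeasurable.congr
      (f := fun t => Real.exp (-l * t) * (N t).toReal) ?_ ?_
    · have hcont : Continuous fun t : ℝ => Real.exp (-l * t) := by fun_prop
      exact (hcont.measurable.mul hN_meas.ennreal_toReal).aestronglyMeasurable
    · filter_upwards [hmem] with t ht
      rw [hU t ht]
  rw [integral_eq_lintegral_of_nonneg_ae hLHS_nn hLHS_sm]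
  have hkey : (∫⁻ t, ENNReal.ofReal (Real.exp (-l * t) *
      (∫ r in (0:ℝ)..t, ∫ τ, u τ * G r τ ∂ν)) ∂ν) = ENNReal.ofReal (1 / l) * J := by
    rw [← hswap2]
    apply lintegral_congr_ae
    filter_upwards [hmem] with t ht
    rw [hU t ht, ENNReal.ofReal_mul (exp_nonneg _), ENNReal.ofReal_toReal (hN_fin t ht)]
  rw [hkey, hRHS, ENNReal.toReal_mul, ENNReal.toReal_ofReal (by positivity)]
  rw [← mul_assoc]
  field_simp
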